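/- For any prime p and integers q, q' with q·q' ≡ -1 mod p and neither divisible by p, one has I_{p,q} = -I_{p,q'}, where I_{p,q} = Σ_{k=1}^{p-1} ((1+μ^k)(1+μ^{kq}))/((1-μ^k)(1-μ^{kq})) and μ = exp(2πi/p). In particular I_{p,q} = -I_{p,-q} when q' ≡ -q. -/

import Mathlib

open Finset

noncomputable def mu (p : ℕ) : ℂ := Complex.exp (2 * Real.pi * Complex.I / p)

noncomputable def Ipq (p : ℕ) (q : ℤ) : ℂ :=
  ∑ k ∈ Finset.Icc 1 (p - 1),
    ((1 + mu p ^ (k : ℤ)) * (1 + mu p ^ (q * k))) /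
      ((1 - mu p ^ (k : ℤ)) * (1 - mu p ^ (q * k)))

lemma mu_ne_zero (p : ℕ) : mu p ≠ 0 := Complex.exp_ne_zero _

lemma mu_prim (p : ℕ) (hp : p ≠ 0) : IsPrimitiveRoot (mu p) p := by
  simpa [mu] using Complex.isPrimitiveRoot_exp p hp

lemma mu_zpow_congr (p : ℕ) (hp : p ≠ 0) {a b : ℤ} (h : (a : ZMod p) = (b : ZMod p)) :
    mu p ^ a = mu p ^ b := by
  have hd : (p : ℤ) ∣ a - b := by
    rwa [← ZMod.intCast_zmod_eq_zero_iff_dvd, Int.cast_sub, sub_eq_zero]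
  obtain ⟨c, hc⟩ := hd
  have hab : a = b + p * c := by linarith
  have h1 : mu p ^ (p : ℤ) = 1 := by
    rw [zpow_natCast]; exact (mu_prim p hp).pow_eq_one
  rw [hab, zpow_add₀ (mu_ne_zero p), zpow_mul, h1, one_zpow, mul_one]

lemma mu_zpow_ne_one (p : ℕ) (hp : p.Prime) {a : ℤ} (ha : ¬ (p : ℤ) ∣ a) :
    mu p ^ a ≠ 1 := by
  intro h
  exact ha (((mu_prim p hp.ne_zero).zpow_eq_one_iff_dvd a).mp h)

theorem stmt_2 (p : ℕ) (hp : p.Prime) (q q' : ℤ)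
    (hq : ¬ (p : ℤ) ∣ q) (hq' : ¬ (p : ℤ) ∣ q')
    (hqq' : q * q' ≡ -1 [ZMOD p]) :
    Ipq p q = - Ipq p q' := by
  haveI : Fact p.Prime := ⟨hp⟩
  have hp0 : p ≠ 0 := hp.ne_zero
  have hp2 : 2 ≤ p := hp.two_le
  have hqq : ((q : ZMod p) * (q' : ZMod p)) = -1 := by
    have := (ZMod.intCast_eq_intCast_iff (q * q') (-1) p).mpr hqq'
    push_cast at this
    exact this
  have hqz : (q : ZMod p) ≠ 0 := by
    rwa [Ne, ZMod.intCast_zmod_eq_zero_iff_dvd]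
  have hq'z : (q' : ZMod p) ≠ 0 := by
    rwa [Ne, ZMod.intCast_zmod_eq_zero_iff_dvd]
  have hmem : ∀ x : ZMod p, x ≠ 0 → x.val ∈ Finset.Icc 1 (p - 1) := by
    intro x hx
    have h1 : x.val ≠ 0 := fun h => hx ((ZMod.val_eq_zero x).mp h)
    have h2 : x.val < p := ZMod.val_lt x
    rw [Finset.mem_Icc]; omega
  have hkz : ∀ k : ℕ, k ∈ Finset.Icc 1 (p - 1) → ((k : ℕ) : ZMod p) ≠ 0 := by
    intro k hk
    rw [Finset.mem_Icc] at hk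
    rw [Ne, ZMod.natCast_eq_zero_iff]
    intro hdvd
    have := Nat.le_of_dvd (by omega) hdvd
    omega
  rw [Ipq, Ipq, ← Finset.sum_neg_distrib]
  refine Finset.sum_nbij' (i := fun k : ℕ => ((q : ZMod p) * (k : ZMod p)).val)
    (j := fun k : ℕ => ((-(q' : ZMod p)) * (k : ZMod p)).val) ?_ ?_ ?_ ?_ ?_
  · intro k hk
    exact hmem _ (mul_ne_zero hqz (hkz k hk))
  · intro k hk
    exact hmem _ (mul_ne_zero (neg_ne_zero.mpr hq'z) (hkz k hk))
  · intro k hk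
    try dsimp only
    rw [Finset.mem_Icc] at hk
    have : (-(q' : ZMod p)) * (((q : ZMod p) * (k : ZMod p)).val : ZMod p)
        = (k : ZMod p) := by
      rw [ZMod.natCast_val, ZMod.cast_id]
      rw [← mul_assoc, neg_mul, mul_comm (q' : ZMod p) (q : ZMod p), hqq]
      ring
    rw [this, ZMod.val_cast_of_lt (by omega)]
  · intro k hk
    try dsimp only
    rw [Finset.mem_Icc] at hk
    have : (q : ZMod p) * (((-(q' : ZMod p)) * (k : ZMod p)).val : ZMod p)
        = (k : ZMod p) := by
      rw [ZMod.natCast_val, ZMod.cast_id]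
      rw [← mul_assoc, mul_neg, hqq]
      ring
    rw [this, ZMod.val_cast_of_lt (by omega)]
  · intro k hk
    have hkmem := hk
    rw [Finset.mem_Icc] at hk
    set j : ℕ := ((q : ZMod p) * (k : ZMod p)).val with hjdef
    have hjz : ((j : ℕ) : ZMod p) = (q : ZMod p) * (k : ZMod p) := by
      rw [hjdef, ZMod.natCast_val, ZMod.cast_id]
    have h1 : mu p ^ (j : ℤ) = mu p ^ (q * (k : ℤ)) := by
      apply mu_zpow_congr p hp0
      push_cast
      rw [hjz]
    have h2 : mu p ^ (q' * (j : ℤ)) = mu p ^ (-(k : ℤ)) := by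
      apply mu_zpow_congr p hp0
      push_cast
      rw [hjz, ← mul_assoc, mul_comm (q' : ZMod p) (q : ZMod p), hqq]
      ring
    rw [h1, h2, zpow_neg]
    have hpk : ¬ (p : ℤ) ∣ (k : ℤ) := by
      rw [Int.natCast_dvd_natCast]
      intro hdvd
      have := Nat.le_of_dvd (by omega) hdvd
      omega
    set A := mu p ^ ((k : ℕ) : ℤ) with hAdef
    set B := mu p ^ (q * (k : ℤ)) with hBdef
    have hA0 : A ≠ 0 := zpow_ne_zero _ (mu_ne_zero p)
    have hA1 : A ≠ 1 := mu_zpow_ne_one p hp hpk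
    have hB1 : B ≠ 1 := by
      apply mu_zpow_ne_one p hp
      intro hdvd
      rcases (Nat.prime_iff_prime_int.mp hp).dvd_mul.mp hdvd with h | h
      · exact hq h
      · exact hpk h
    have hAi1 : A⁻¹ ≠ 1 := fun h => hA1 (inv_eq_one.mp h)
    have d1 : (1 : ℂ) - A ≠ 0 := sub_ne_zero.mpr fun h => hA1 h.symm
    have d2 : (1 : ℂ) - B ≠ 0 := sub_ne_zero.mpr fun h => hB1 h.symm
    have d3 : (1 : ℂ) - A⁻¹ ≠ 0 := sub_ne_zero.mpr fun h => hAi1 h.symm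
    have hAm1 : A - 1 ≠ 0 := sub_ne_zero.mpr hA1
    have hinv : (1 + A⁻¹) / (1 - A⁻¹) = -((1 + A) / (1 - A)) := by
      have e1 : 1 + A⁻¹ = A⁻¹ * (A + 1) := by
        rw [mul_add, inv_mul_cancel₀ hA0, mul_one, add_comm]
      have e2 : 1 - A⁻¹ = A⁻¹ * (A - 1) := by
        rw [mul_sub, inv_mul_cancel₀ hA0, mul_one]
      rw [e1, e2, mul_div_mul_left _ _ (inv_ne_zero hA0)]
      rw [div_eq_iff hAm1, neg_mul_comm, neg_sub, div_mul_eq_mul_div,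
        eq_div_iff d1]
      ring
    rw [← div_mul_div_comm, ← div_mul_div_comm, hinv]
    ring
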